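/- Let μ and ν be finite Borel measures on ℝ with continuous positive densities h and h' respectively, and suppose that for all w ≤ s we have h(s)·h'(w) ≤ h'(s)·h(w). Then for all s ≤ s', (∫_{−∞}^{s} h(w) dw)·(∫_{−∞}^{s'} h'(w) dw) ≥ (∫_{−∞}^{s'} h(w) dw)·(∫_{−∞}^{s} h'(w) dw). -/

import Mathlib

open MeasureTheory

/-- Monotone likelihood ratio implies monotonicity of the ratio of CDFs:
if `h, h'` are continuous positive integrable densities with `h s * h' w ≤ h' s * h w`
whenever `w ≤ s`, then for `s ≤ s'`,
`(∫_{-∞}^{s} h) * (∫_{-∞}^{s'} h') ≥ (∫_{-∞}^{s'} h) * (∫_{-∞}^{s} h')`. -/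
theorem cdf_ratio_mono_of_mlr (h h' : ℝ → ℝ) (hc : Continuous h) (hc' : Continuous h')
    (hpos : ∀ x, 0 < h x) (hpos' : ∀ x, 0 < h' x)
    (hint : Integrable h) (hint' : Integrable h')
    (hlr : ∀ w s : ℝ, w ≤ s → h s * h' w ≤ h' s * h w) :
    ∀ s s' : ℝ, s ≤ s' →
      (∫ w in Set.Iic s', h w) * (∫ w in Set.Iic s, h' w) ≤
        (∫ w in Set.Iic s, h w) * (∫ w in Set.Iic s', h' w) := by
  intro s s' hss
  set C : ℝ := ∫ w in Set.Iic s, h w with hC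
  set C' : ℝ := ∫ w in Set.Iic s, h' w with hC'
  -- split Iic s' into Iic s ∪ Ioc s s'
  have hsplit : ∀ g : ℝ → ℝ, Integrable g →
      (∫ w in Set.Iic s', g w) = (∫ w in Set.Iic s, g w) + ∫ w in Set.Ioc s s', g w := by
    intro g hg
    rw [← Set.Iic_union_Ioc_eq_Iic hss,
      setIntegral_union (Set.Iic_disjoint_Ioc le_rfl) measurableSet_Ioc
        hg.integrableOn hg.integrableOn]
  -- pointwise comparison for x > s
  have key : ∀ x ∈ Set.Ioc s s', h x * C' ≤ h' x * C := by
    intro x hx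
    rw [hC, hC', ← integral_const_mul, ← integral_const_mul]
    refine setIntegral_mono_on (hint'.integrableOn.const_mul _)
      (hint.integrableOn.const_mul _) measurableSet_Iic ?_
    intro y hy
    exact hlr y x (le_trans hy hx.1.le)
  have h1 : (∫ w in Set.Ioc s s', h w) * C' ≤ (∫ w in Set.Ioc s s', h' w) * C := by
    rw [← integral_mul_const, ← integral_mul_const]
    exact setIntegral_mono_on (hint.integrableOn.mul_const _)
      (hint'.integrableOn.mul_const _) measurableSet_Ioc key
  rw [hsplit h hint, hsplit h' hint', add_mul, mul_add]
  exact add_le_add_right (by linarith) _
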